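/- For every i ∈ {1,…,C}, the maximum of |S ∩ {1,…,i}| over all sets S ⊆ {1,…,C} admitting a feasible assignment equals i − max_{1≤j≤i} max(0, j − V(j)); that is, the maximum number of chunks among the first i chunks that can be fetched by their deadlines is i minus the forward-scan skip count at i. -/

import Mathlib

/-- Cumulative bandwidth of a link up to time `t`: `R(t) = Σ_{j=1}^t B(j)`. -/
noncomputable def cumBW (B : ℕ → ℝ) (t : ℕ) : ℝ := ∑ j ∈ Finset.Icc 1 t, B j

/-- `V(i) = Σ_{u=1}^U ⌊min(η_u, R_u(d(i)))/Y⌋`. -/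
noncomputable def Vval (U : ℕ) (Y : ℝ) (d : ℕ → ℕ) (B : Fin U → ℕ → ℝ)
    (η : Fin U → ℝ) (i : ℕ) : ℕ :=
  ∑ u : Fin U, ⌊min (η u) (cumBW (B u) (d i)) / Y⌋₊

/-- A feasible assignment for a set `S` of chunks: a link choice `ℓ i` and download
amounts `z i j ≥ 0` so that each chunk `i ∈ S` gets its full layer of size `Y` over
link `ℓ i` by its deadline `d i`, respecting per-slot bandwidths and per-link
maximum contributions. -/
def FeasibleAssignment (U : ℕ) (Y : ℝ) (d : ℕ → ℕ) (B : Fin U → ℕ → ℝ)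
    (η : Fin U → ℝ) (S : Finset ℕ) : Prop :=
  ∃ (ℓ : ℕ → Fin U) (z : ℕ → ℕ → ℝ),
    (∀ i ∈ S, ∀ j, 0 ≤ z i j) ∧
    (∀ i ∈ S, ∑ j ∈ Finset.Icc 1 (d i), z i j = Y) ∧
    (∀ i ∈ S, ∀ j, (j < 1 ∨ d i < j) → z i j = 0) ∧
    (∀ u : Fin U, ∀ j, 1 ≤ j →
      ∑ i ∈ S.filter (fun i => ℓ i = u), z i j ≤ B u j) ∧
    (∀ u : Fin U,
      ∑ i ∈ S.filter (fun i => ℓ i = u), ∑ j ∈ Finset.Icc 1 (d i), z i j ≤ η u)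

namespace MaxPrefixAux

lemma cumBW_zero (B : ℕ → ℝ) : cumBW B 0 = 0 := by simp [cumBW]

lemma cumBW_mono {B : ℕ → ℝ} (hB : ∀ j, 1 ≤ j → 0 ≤ B j) {s t : ℕ} (h : s ≤ t) :
    cumBW B s ≤ cumBW B t := by
  apply Finset.sum_le_sum_of_subset_of_nonneg (Finset.Icc_subset_Icc_right h)
  intro j hj _
  exact hB j (Finset.mem_Icc.1 hj).1

lemma cumBW_nonneg {B : ℕ → ℝ} (hB : ∀ j, 1 ≤ j → 0 ≤ B j) (t : ℕ) : 0 ≤ cumBW B t := by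
  have := cumBW_mono hB (Nat.zero_le t)
  rwa [cumBW_zero] at this

lemma cumBW_succ {B : ℕ → ℝ} {t : ℕ} (ht : 1 ≤ t) :
    cumBW B t = cumBW B (t - 1) + B t := by
  obtain ⟨s, rfl⟩ : ∃ s, t = s + 1 := ⟨t - 1, by omega⟩
  simp [cumBW, Finset.sum_Icc_succ_top (Nat.le_add_left 1 s)]

lemma telescope_Icc (f : ℕ → ℝ) (T : ℕ) :
    ∑ t ∈ Finset.Icc 1 T, (f t - f (t - 1)) = f T - f 0 := by
  induction T with
  | zero => simp
  | succ n ih =>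
    rw [Finset.sum_Icc_succ_top (by omega), ih]
    simp only [Nat.add_sub_cancel]
    ring

lemma min_diff_mono {c c' a b : ℝ} (hc : c ≤ c') (hab : b ≤ a) :
    min c' b - min c b ≤ min c' a - min c a := by
  simp only [min_def]
  split_ifs <;> linarith

lemma min_diff_le {c a b : ℝ} (hab : b ≤ a) : min c a - min c b ≤ a - b := by
  simp only [min_def]
  split_ifs <;> linarith

lemma rank_telescope (g : ℕ → ℝ) (T : Finset ℕ) :
    ∑ i ∈ T, (g ((T.filter (fun k => k ≤ i)).card) - g ((T.filter (fun k => k ≤ i)).card - 1))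
      = g T.card - g 0 := by
  induction T using Finset.strongInduction with
  | _ T ih =>
    rcases T.eq_empty_or_nonempty with rfl | hT
    · simp
    · set m := T.max' hT with hm
      have hmem : m ∈ T := T.max'_mem hT
      have hle : ∀ k ∈ T, k ≤ m := fun k hk => T.le_max' k hk
      rw [← Finset.sum_erase_add T _ hmem]
      have h1 : (T.filter (fun k => k ≤ m)).card = T.card := by
        rw [Finset.filter_true_of_mem hle]
      have h2 : ∀ i ∈ T.erase m, T.filter (fun k => k ≤ i) = (T.erase m).filter (fun k => k ≤ i) := by
        intro i hi
        have him : i < m := lt_of_le_of_ne (hle i (Finset.mem_of_mem_erase hi))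
          (Finset.ne_of_mem_erase hi)
        ext k
        simp only [Finset.mem_filter, Finset.mem_erase]
        constructor
        · rintro ⟨hk, hki⟩; exact ⟨⟨by omega, hk⟩, hki⟩
        · rintro ⟨⟨_, hk⟩, hki⟩; exact ⟨hk, hki⟩
      have h3 : ∑ i ∈ T.erase m,
          (g ((T.filter (fun k => k ≤ i)).card) - g ((T.filter (fun k => k ≤ i)).card - 1))
          = g (T.erase m).card - g 0 := by
        rw [Finset.sum_congr rfl (fun i hi => by rw [h2 i hi])]
        exact ih (T.erase m) (Finset.erase_ssubset hmem)
      rw [h3, h1, Finset.card_erase_of_mem hmem]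
      ring

end MaxPrefixAux

namespace MaxPrefixAux

noncomputable def cap (U : ℕ) (Y : ℝ) (d : ℕ → ℕ) (B : Fin U → ℕ → ℝ)
    (η : Fin U → ℝ) (u : Fin U) (i : ℕ) : ℕ :=
  ⌊min (η u) (cumBW (B u) (d i)) / Y⌋₊

lemma Vval_eq_sum_cap (U : ℕ) (Y : ℝ) (d : ℕ → ℕ) (B : Fin U → ℕ → ℝ)
    (η : Fin U → ℝ) (i : ℕ) : Vval U Y d B η i = ∑ u : Fin U, cap U Y d B η u i := rfl

lemma cap_mono {U : ℕ} {Y : ℝ} (hY : 0 < Y) {d : ℕ → ℕ} (hd : Monotone d)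
    {B : Fin U → ℕ → ℝ} (hB : ∀ u j, 1 ≤ j → 0 ≤ B u j) {η : Fin U → ℝ}
    (u : Fin U) {i i' : ℕ} (h : i ≤ i') : cap U Y d B η u i ≤ cap U Y d B η u i' := by
  apply Nat.floor_mono
  gcongr
  exact cumBW_mono (hB u) (hd h)

lemma exists_good (U : ℕ) (hU : 1 ≤ U) (Y : ℝ) (hY : 0 < Y) (d : ℕ → ℕ) (hd : Monotone d)
    (B : Fin U → ℕ → ℝ) (hB : ∀ u j, 1 ≤ j → 0 ≤ B u j) (η : Fin U → ℝ) :
    ∀ S : Finset ℕ, (∀ i ∈ S, (S.filter (fun k => k ≤ i)).card ≤ Vval U Y d B η i) →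
    ∃ ℓ : ℕ → Fin U, ∀ i ∈ S, ∀ u : Fin U,
      (S.filter (fun k => k ≤ i ∧ ℓ k = u)).card ≤ cap U Y d B η u i := by
  intro S
  induction S using Finset.strongInduction with
  | _ S ih =>
    intro hcond
    rcases S.eq_empty_or_nonempty with rfl | hS
    · exact ⟨fun _ => ⟨0, hU⟩, by simp⟩
    set m := S.max' hS with hm
    have hmem : m ∈ S := S.max'_mem hS
    have hle : ∀ k ∈ S, k ≤ m := fun k hk => S.le_max' k hk
    set S' := S.erase m with hS'
    have hcond' : ∀ i ∈ S', (S'.filter (fun k => k ≤ i)).card ≤ Vval U Y d B η i := by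
      intro i hi
      refine le_trans (Finset.card_le_card ?_) (hcond i (Finset.mem_of_mem_erase hi))
      exact Finset.filter_subset_filter _ (Finset.erase_subset _ _)
    obtain ⟨ℓ', hℓ'⟩ := ih S' (Finset.erase_ssubset hmem) hcond'
    -- counts per link on S'
    set t : Fin U → ℕ := fun u => (S'.filter (fun k => ℓ' k = u)).card with ht
    have hsum : ∑ u : Fin U, t u = S'.card :=
      (Finset.card_eq_sum_card_fiberwise (fun x _ => Finset.mem_univ (ℓ' x))).symm
    have hScard : S.card ≤ Vval U Y d B η m := by
      have := hcond m hmem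
      rwa [Finset.filter_true_of_mem hle] at this
    have hcard' : S'.card = S.card - 1 := Finset.card_erase_of_mem hmem
    have hpos : 1 ≤ S.card := Finset.card_pos.2 hS
    -- each link count bounded by its capacity at m
    have htle : ∀ u, t u ≤ cap U Y d B η u m := by
      intro u
      rcases S'.eq_empty_or_nonempty with he | hS'ne
      · simp [ht, he]
      · set m' := S'.max' hS'ne with hm'
        have hm'S : m' ∈ S' := S'.max'_mem hS'ne
        have hm'm : m' ≤ m := hle m' (Finset.mem_of_mem_erase hm'S)
        have : S'.filter (fun k => ℓ' k = u) = S'.filter (fun k => k ≤ m' ∧ ℓ' k = u) := by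
          apply Finset.filter_congr
          intro k hk
          exact ⟨fun h => ⟨S'.le_max' k hk, h⟩, fun h => h.2⟩
        calc t u = (S'.filter (fun k => k ≤ m' ∧ ℓ' k = u)).card := congrArg Finset.card this
          _ ≤ cap U Y d B η u m' := hℓ' m' hm'S u
          _ ≤ cap U Y d B η u m := cap_mono hY hd hB u hm'm
    -- find a link with slack
    have hex : ∃ u : Fin U, t u < cap U Y d B η u m := by
      by_contra hcon
      push_neg at hcon
      have h1 : Vval U Y d B η m ≤ ∑ u : Fin U, t u := by
        rw [Vval_eq_sum_cap]
        exact Finset.sum_le_sum (fun u _ => hcon u)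
      omega
    obtain ⟨u', hu'⟩ := hex
    refine ⟨fun k => if k = m then u' else ℓ' k, ?_⟩
    intro i hi u
    by_cases him : i = m
    · subst him
      have hins : m ∉ S'.filter (fun k => ℓ' k = u) := by
        intro h
        exact (Finset.mem_erase.1 (Finset.mem_filter.1 h).1).1 rfl
      have hset : S.filter (fun k => k ≤ m ∧ (if k = m then u' else ℓ' k) = u)
          = if u' = u then insert m (S'.filter (fun k => ℓ' k = u))
            else S'.filter (fun k => ℓ' k = u) := by
         ext k
         by_cases hku : u' = u <;>
           simp only [Finset.mem_filter, Finset.mem_insert, hS', Finset.mem_erase, hku,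
             if_true, if_false] <;>
           constructor
         · rintro ⟨hkS, hki, hkeq⟩
           by_cases hkm : k = m
           · exact Or.inl hkm
           · rw [if_neg hkm] at hkeq
             exact Or.inr ⟨⟨hkm, hkS⟩, hkeq⟩
         · rintro (rfl | ⟨⟨hkm, hkS⟩, hkeq⟩)
           · exact ⟨hmem, le_refl _, by rw [if_pos rfl]⟩
           · exact ⟨hkS, hle k hkS, by rw [if_neg hkm]; exact hkeq⟩
         · rintro ⟨hkS, hki, hkeq⟩
           have hkm : k ≠ m := by
             rintro rfl
             rw [if_pos rfl] at hkeq
             exact hku hkeq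
           rw [if_neg hkm] at hkeq
           exact ⟨⟨hkm, hkS⟩, hkeq⟩
         · rintro ⟨⟨hkm, hkS⟩, hkeq⟩
           exact ⟨hkS, hle k hkS, by rw [if_neg hkm]; exact hkeq⟩
      rw [hset]
      by_cases hku : u' = u
      · rw [if_pos hku, Finset.card_insert_of_notMem hins]
        have h2 : (S'.filter (fun k => ℓ' k = u)).card = t u := rfl
        have h3 := hu'
        rw [hku] at h3
        omega
      · rw [if_neg hku]
        exact htle u
    · have hiS' : i ∈ S' := Finset.mem_erase.2 ⟨him, hi⟩
      have hilt : i < m := lt_of_le_of_ne (hle i hi) him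
      have hset : S.filter (fun k => k ≤ i ∧ (if k = m then u' else ℓ' k) = u)
          = S'.filter (fun k => k ≤ i ∧ ℓ' k = u) := by
        ext k
        simp only [Finset.mem_filter, Finset.mem_erase, hS']
        constructor
        · rintro ⟨hkS, hki, hkeq⟩
          have hkm : k ≠ m := by omega
          rw [if_neg hkm] at hkeq
          exact ⟨⟨hkm, hkS⟩, hki, hkeq⟩
        · rintro ⟨⟨hkm, hkS⟩, hki, hkeq⟩
          exact ⟨hkS, hki, by rw [if_neg hkm]; exact hkeq⟩
      rw [hset]
      exact hℓ' i hiS' u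

lemma feasible_of_good (U : ℕ) (Y : ℝ) (hY : 0 < Y) (d : ℕ → ℕ) (hd : Monotone d)
    (B : Fin U → ℕ → ℝ) (hB : ∀ u j, 1 ≤ j → 0 ≤ B u j) (η : Fin U → ℝ)
    (hη : ∀ u, 0 ≤ η u) (S : Finset ℕ) (ℓ : ℕ → Fin U)
    (hgood : ∀ i ∈ S, ∀ u : Fin U,
      (S.filter (fun k => k ≤ i ∧ ℓ k = u)).card ≤ cap U Y d B η u i) :
    FeasibleAssignment U Y d B η S := by
  classical
  set R : Fin U → ℕ → ℝ := fun u t => cumBW (B u) t with hR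
  set r : ℕ → ℕ := fun i => (S.filter (fun k => k ≤ i ∧ ℓ k = ℓ i)).card with hr
  set A : ℕ → ℕ → ℝ := fun i t =>
    min ((r i : ℝ) * Y) (R (ℓ i) t) - min (((r i - 1 : ℕ) : ℝ) * Y) (R (ℓ i) t) with hA
  set z : ℕ → ℕ → ℝ := fun i t => A i t - A i (t - 1) with hz
  have hRmono : ∀ u : Fin U, ∀ s t : ℕ, s ≤ t → R u s ≤ R u t :=
    fun u _ _ h => cumBW_mono (hB u) h
  have hRnonneg : ∀ u t, 0 ≤ R u t := fun u t => cumBW_nonneg (hB u) t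
  have hR0 : ∀ u, R u 0 = 0 := fun u => cumBW_zero (B u)
  have hr1 : ∀ i ∈ S, 1 ≤ r i := by
    intro i hi
    apply Finset.card_pos.2
    exact ⟨i, Finset.mem_filter.2 ⟨hi, le_refl i, rfl⟩⟩
  have hrcap : ∀ i ∈ S, r i ≤ cap U Y d B η (ℓ i) i := fun i hi => hgood i hi (ℓ i)
  have hcapY : ∀ u : Fin U, ∀ i, (cap U Y d B η u i : ℝ) * Y ≤ min (η u) (R u (d i)) := by
    intro u i
    have h0 : 0 ≤ min (η u) (R u (d i)) := le_min (hη u) (hRnonneg u (d i))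
    have := Nat.floor_le (div_nonneg h0 hY.le)
    calc (cap U Y d B η u i : ℝ) * Y ≤ (min (η u) (R u (d i)) / Y) * Y := by
          apply mul_le_mul_of_nonneg_right this hY.le
      _ = min (η u) (R u (d i)) := div_mul_cancel₀ _ hY.ne'
  have hriY : ∀ i ∈ S, (r i : ℝ) * Y ≤ R (ℓ i) (d i) := by
    intro i hi
    calc (r i : ℝ) * Y ≤ (cap U Y d B η (ℓ i) i : ℝ) * Y := by
          apply mul_le_mul_of_nonneg_right _ hY.le
          exact_mod_cast hrcap i hi
      _ ≤ min (η (ℓ i)) (R (ℓ i) (d i)) := hcapY (ℓ i) i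
      _ ≤ R (ℓ i) (d i) := min_le_right _ _
  have hcast : ∀ i ∈ S, ((r i - 1 : ℕ) : ℝ) = (r i : ℝ) - 1 := by
    intro i hi
    have := hr1 i hi
    push_cast [Nat.cast_sub this]
    ring
  -- A at time 0 vanishes
  have hA0 : ∀ i, A i 0 = 0 := by
    intro i
    simp only [hA, hR0]
    rw [min_eq_right, min_eq_right]
    · ring
    · positivity
    · positivity
  -- z nonneg
  have hz0 : ∀ i, z i 0 = 0 := by
    intro i
    simp only [hz, Nat.zero_sub, sub_self]
  have hzpos : ∀ i ∈ S, ∀ t, 0 ≤ z i t := by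
    intro i hi t
    rcases Nat.eq_zero_or_pos t with rfl | ht
    · rw [hz0]
    · have hcc : ((r i - 1 : ℕ) : ℝ) * Y ≤ (r i : ℝ) * Y := by
        apply mul_le_mul_of_nonneg_right _ hY.le
        exact_mod_cast Nat.sub_le (r i) 1
      have := min_diff_mono hcc (hRmono (ℓ i) _ _ (Nat.sub_le t 1))
      simp only [hz, hA]
      linarith
  -- full download by deadline
  have hfull : ∀ i ∈ S, ∑ t ∈ Finset.Icc 1 (d i), z i t = Y := by
    intro i hi
    have htel : ∑ t ∈ Finset.Icc 1 (d i), z i t = A i (d i) - A i 0 := telescope_Icc (A i) (d i)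
    rw [htel, hA0]
    have h1 : ((r i - 1 : ℕ) : ℝ) * Y ≤ (r i : ℝ) * Y := by
      apply mul_le_mul_of_nonneg_right _ hY.le
      exact_mod_cast Nat.sub_le (r i) 1
    have h2 : (r i : ℝ) * Y ≤ R (ℓ i) (d i) := hriY i hi
    simp only [hA]
    rw [min_eq_left h2, min_eq_left (le_trans h1 h2), hcast i hi]
    ring
  -- zero outside window
  have hzero : ∀ i ∈ S, ∀ j, (j < 1 ∨ d i < j) → z i j = 0 := by
    intro i hi j hj
    rcases hj with hj | hj
    · interval_cases j
      exact hz0 i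
    · have h2 : (r i : ℝ) * Y ≤ R (ℓ i) (j - 1) :=
        le_trans (hriY i hi) (hRmono (ℓ i) _ _ (by omega))
      have h2' : (r i : ℝ) * Y ≤ R (ℓ i) j := le_trans h2 (hRmono (ℓ i) _ _ (Nat.sub_le j 1))
      have h1 : ((r i - 1 : ℕ) : ℝ) * Y ≤ (r i : ℝ) * Y := by
        apply mul_le_mul_of_nonneg_right _ hY.le
        exact_mod_cast Nat.sub_le (r i) 1
      simp only [hz, hA]
      rw [min_eq_left h2', min_eq_left h2, min_eq_left (le_trans h1 h2'),
        min_eq_left (le_trans h1 h2)]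
      ring
  refine ⟨ℓ, z, hzpos, hfull, hzero, ?_, ?_⟩
  · -- per-slot constraint
    intro u t ht
    set T : Finset ℕ := S.filter (fun k => ℓ k = u) with hT
    set g : ℕ → ℝ := fun k => min ((k : ℝ) * Y) (R u t) - min ((k : ℝ) * Y) (R u (t - 1)) with hg
    have hrT : ∀ i ∈ T, r i = (T.filter (fun k => k ≤ i)).card := by
      intro i hi
      have hu : ℓ i = u := (Finset.mem_filter.1 hi).2
      have : S.filter (fun k => k ≤ i ∧ ℓ k = ℓ i) = T.filter (fun k => k ≤ i) := by
        ext k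
        simp only [Finset.mem_filter, hT, hu]
        tauto
      exact congrArg Finset.card this
    have hzeq : ∀ i ∈ T, z i t =
        g ((T.filter (fun k => k ≤ i)).card) - g ((T.filter (fun k => k ≤ i)).card - 1) := by
      intro i hi
      have hu : ℓ i = u := (Finset.mem_filter.1 hi).2
      rw [← hrT i hi]
      simp only [hz, hA, hg, hu]
      ring
    rw [Finset.sum_congr rfl hzeq, rank_telescope g T]
    have hgz : g 0 = 0 := by
      simp only [hg]
      push_cast
      rw [zero_mul, min_eq_left (hRnonneg u t), min_eq_left (hRnonneg u (t-1))]
      ring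
    rw [hgz, sub_zero]
    simp only [hg]
    have hB' : R u t = R u (t - 1) + B u t := cumBW_succ ht
    have := min_diff_le (c := (T.card : ℝ) * Y) (hRmono u _ _ (Nat.sub_le t 1))
    linarith
  · -- per-link total
    intro u
    set T : Finset ℕ := S.filter (fun k => ℓ k = u) with hT
    have hsum : ∑ i ∈ T, ∑ t ∈ Finset.Icc 1 (d i), z i t = T.card * Y := by
      rw [Finset.sum_congr rfl (fun i hi => hfull i (Finset.mem_filter.1 hi).1)]
      rw [Finset.sum_const, nsmul_eq_mul]
    rw [hsum]
    rcases T.eq_empty_or_nonempty with he | hne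
    · simp only [he, Finset.card_empty, Nat.cast_zero, zero_mul]
      exact hη u
    · set mx := T.max' hne with hmx
      have hmxT : mx ∈ T := T.max'_mem hne
      have hmxS : mx ∈ S := (Finset.mem_filter.1 hmxT).1
      have hmxu : ℓ mx = u := (Finset.mem_filter.1 hmxT).2
      have hTcard : T.card = (S.filter (fun k => k ≤ mx ∧ ℓ k = u)).card := by
        have : S.filter (fun k => k ≤ mx ∧ ℓ k = u) = T := by
          ext k
          simp only [Finset.mem_filter, hT]
          constructor
          · rintro ⟨h1, _, h3⟩; exact ⟨h1, h3⟩
          · rintro ⟨h1, h3⟩; exact ⟨h1, T.le_max' k (Finset.mem_filter.2 ⟨h1, h3⟩), h3⟩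
        rw [this]
      have hc : T.card ≤ cap U Y d B η u mx := by
        rw [hTcard]
        exact hgood mx hmxS u
      calc (T.card : ℝ) * Y ≤ (cap U Y d B η u mx : ℝ) * Y := by
            apply mul_le_mul_of_nonneg_right _ hY.le
            exact_mod_cast hc
        _ ≤ min (η u) (R u (d mx)) := hcapY u mx
        _ ≤ η u := min_le_left _ _

lemma card_le_V (U : ℕ) (Y : ℝ) (hY : 0 < Y) (d : ℕ → ℕ) (hd : Monotone d)
    (B : Fin U → ℕ → ℝ) (hB : ∀ u j, 1 ≤ j → 0 ≤ B u j) (η : Fin U → ℝ)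
    (hη : ∀ u, 0 ≤ η u) (S : Finset ℕ)
    (hfeas : FeasibleAssignment U Y d B η S) (j : ℕ) :
    (S.filter (fun k => k ≤ j)).card ≤ Vval U Y d B η j := by
  classical
  obtain ⟨ℓ, z, hpos, hsumY, hzero, hslot, hcap⟩ := hfeas
  set P : Finset ℕ := S.filter (fun k => k ≤ j) with hP
  have hPcard : P.card = ∑ u : Fin U, (P.filter (fun k => ℓ k = u)).card :=
    Finset.card_eq_sum_card_fiberwise (fun x _ => Finset.mem_univ (ℓ x))
  rw [hPcard, Vval_eq_sum_cap]
  apply Finset.sum_le_sum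
  intro u _
  set T : Finset ℕ := P.filter (fun k => ℓ k = u) with hT
  have hTS : ∀ i ∈ T, i ∈ S := by
    intro i hi
    exact (Finset.mem_filter.1 (Finset.mem_filter.1 hi).1).1
  have hTj : ∀ i ∈ T, i ≤ j := by
    intro i hi
    exact (Finset.mem_filter.1 (Finset.mem_filter.1 hi).1).2
  have hTsub : T ⊆ S.filter (fun i => ℓ i = u) := by
    intro i hi
    exact Finset.mem_filter.2 ⟨hTS i hi, (Finset.mem_filter.1 hi).2⟩
  -- the sum of downloads of chunks in T
  have hkey : (T.card : ℝ) * Y = ∑ i ∈ T, ∑ t ∈ Finset.Icc 1 (d i), z i t := by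
    rw [Finset.sum_congr rfl (fun i hi => hsumY i (hTS i hi)), Finset.sum_const, nsmul_eq_mul]
  have hηb : (T.card : ℝ) * Y ≤ η u := by
    rw [hkey]
    refine le_trans (Finset.sum_le_sum_of_subset_of_nonneg hTsub ?_) (hcap u)
    intro i hiS _
    have hiS' : i ∈ S := (Finset.mem_filter.1 hiS).1
    exact Finset.sum_nonneg (fun t _ => hpos i hiS' t)
  have hRb : (T.card : ℝ) * Y ≤ cumBW (B u) (d j) := by
    rw [hkey]
    have hext : ∀ i ∈ T, ∑ t ∈ Finset.Icc 1 (d i), z i t = ∑ t ∈ Finset.Icc 1 (d j), z i t := by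
      intro i hi
      apply Finset.sum_subset (Finset.Icc_subset_Icc_right (hd (hTj i hi)))
      intro t htj hti
      apply hzero i (hTS i hi) t
      rw [Finset.mem_Icc] at htj hti
      omega
    rw [Finset.sum_congr rfl hext, Finset.sum_comm]
    unfold cumBW
    apply Finset.sum_le_sum
    intro t htmem
    have ht1 : 1 ≤ t := (Finset.mem_Icc.1 htmem).1
    refine le_trans ?_ (hslot u t ht1)
    apply Finset.sum_le_sum_of_subset_of_nonneg hTsub
    intro i hiS _
    exact hpos i (Finset.mem_filter.1 hiS).1 t
  apply Nat.le_floor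
  rw [le_div_iff₀ hY]
  exact le_min hηb hRb

noncomputable def Mfun (U : ℕ) (Y : ℝ) (d : ℕ → ℕ) (B : Fin U → ℕ → ℝ)
    (η : Fin U → ℝ) (j : ℕ) : ℕ :=
  (Finset.Icc 1 j).sup (fun k => k - Vval U Y d B η k)

lemma Vval_mono {U : ℕ} {Y : ℝ} (hY : 0 < Y) {d : ℕ → ℕ} (hd : Monotone d)
    {B : Fin U → ℕ → ℝ} (hB : ∀ u j, 1 ≤ j → 0 ≤ B u j) {η : Fin U → ℝ}
    {a b : ℕ} (hab : a ≤ b) : Vval U Y d B η a ≤ Vval U Y d B η b :=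
  Finset.sum_le_sum (fun u _ => cap_mono hY hd hB u hab)

lemma Mfun_zero (U : ℕ) (Y : ℝ) (d : ℕ → ℕ) (B : Fin U → ℕ → ℝ) (η : Fin U → ℝ) :
    Mfun U Y d B η 0 = 0 := by simp [Mfun]

lemma Mfun_le (U : ℕ) (Y : ℝ) (d : ℕ → ℕ) (B : Fin U → ℕ → ℝ) (η : Fin U → ℝ) (k : ℕ) :
    Mfun U Y d B η k ≤ k := by
  unfold Mfun
  apply Finset.sup_le
  intro b hb
  have := (Finset.mem_Icc.1 hb).2
  omega

lemma Mfun_mono {U : ℕ} {Y : ℝ} {d : ℕ → ℕ} {B : Fin U → ℕ → ℝ} {η : Fin U → ℝ}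
    {a b : ℕ} (hab : a ≤ b) : Mfun U Y d B η a ≤ Mfun U Y d B η b := by
  unfold Mfun
  exact Finset.sup_mono (Finset.Icc_subset_Icc_right hab)

lemma sub_V_le_Mfun (U : ℕ) (Y : ℝ) (d : ℕ → ℕ) (B : Fin U → ℕ → ℝ) (η : Fin U → ℝ)
    (j : ℕ) : j - Vval U Y d B η j ≤ Mfun U Y d B η j := by
  rcases Nat.eq_zero_or_pos j with rfl | hj
  · simp [Mfun_zero]
  · unfold Mfun
    exact Finset.le_sup (f := fun k => k - Vval U Y d B η k) (Finset.mem_Icc.2 ⟨hj, le_refl j⟩)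

lemma Mfun_succ (U : ℕ) (Y : ℝ) (d : ℕ → ℕ) (B : Fin U → ℕ → ℝ) (η : Fin U → ℝ)
    (n : ℕ) : Mfun U Y d B η (n+1)
      = max ((n+1) - Vval U Y d B η (n+1)) (Mfun U Y d B η n) := by
  have h1 : Finset.Icc 1 (n+1) = insert (n+1) (Finset.Icc 1 n) := by
    ext x
    simp only [Finset.mem_Icc, Finset.mem_insert]
    omega
  rw [Mfun, h1, Finset.sup_insert]
  rfl

lemma keep_count {U : ℕ} {Y : ℝ} (hY : 0 < Y) {d : ℕ → ℕ} (hd : Monotone d)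
    {B : Fin U → ℕ → ℝ} (hB : ∀ u j, 1 ≤ j → 0 ≤ B u j) {η : Fin U → ℝ}
    (i : ℕ) : ∀ k, k ≤ i →
    ((((Finset.Icc 1 i).filter
        (fun j => Mfun U Y d B η j ≤ Mfun U Y d B η (j-1))).filter
      (fun x => x ≤ k)).card = k - Mfun U Y d B η k) := by
  classical
  intro k
  induction k with
  | zero =>
    intro _
    have hset : (((Finset.Icc 1 i).filter
        (fun j => Mfun U Y d B η j ≤ Mfun U Y d B η (j-1))).filter
      (fun x => x ≤ 0)) = (∅ : Finset ℕ) := by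
      ext x
      simp only [Finset.mem_filter, Finset.mem_Icc, Finset.notMem_empty, iff_false]
      rintro ⟨⟨⟨hx, _⟩, _⟩, hx0⟩
      omega
    rw [hset, Mfun_zero]
    simp
  | succ n ihn =>
    intro hk
    have ihn' := ihn (by omega)
    by_cases hkeep : Mfun U Y d B η (n+1) ≤ Mfun U Y d B η n
    · have hset : ((Finset.Icc 1 i).filter
          (fun j => Mfun U Y d B η j ≤ Mfun U Y d B η (j-1))).filter (fun x => x ≤ n+1)
          = insert (n+1) (((Finset.Icc 1 i).filter
          (fun j => Mfun U Y d B η j ≤ Mfun U Y d B η (j-1))).filter (fun x => x ≤ n)) := by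
        ext x
        simp only [Finset.mem_filter, Finset.mem_insert, Finset.mem_Icc]
        constructor
        · rintro ⟨⟨hx, hP⟩, hxk⟩
          rcases Nat.lt_or_ge x (n+1) with h | h
          · exact Or.inr ⟨⟨hx, hP⟩, by omega⟩
          · exact Or.inl (by omega)
        · rintro (rfl | ⟨⟨hx, hP⟩, hxk⟩)
          · exact ⟨⟨⟨by omega, hk⟩, hkeep⟩, le_refl _⟩
          · exact ⟨⟨hx, hP⟩, by omega⟩
      have hnot : (n+1) ∉ ((Finset.Icc 1 i).filter
          (fun j => Mfun U Y d B η j ≤ Mfun U Y d B η (j-1))).filter (fun x => x ≤ n) := by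
        intro h
        have := (Finset.mem_filter.1 h).2
        omega
      rw [hset, Finset.card_insert_of_notMem hnot, ihn']
      have hMeq : Mfun U Y d B η (n+1) = Mfun U Y d B η n :=
        le_antisymm hkeep (Mfun_mono (by omega))
      have := Mfun_le U Y d B η n
      omega
    · have hset : ((Finset.Icc 1 i).filter
          (fun j => Mfun U Y d B η j ≤ Mfun U Y d B η (j-1))).filter (fun x => x ≤ n+1)
          = ((Finset.Icc 1 i).filter
          (fun j => Mfun U Y d B η j ≤ Mfun U Y d B η (j-1))).filter (fun x => x ≤ n) := by
        ext x
        simp only [Finset.mem_filter, Finset.mem_Icc]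
        constructor
        · rintro ⟨⟨hx, hP⟩, hxk⟩
          refine ⟨⟨hx, hP⟩, ?_⟩
          rcases Nat.lt_or_ge x (n+1) with h | h
          · omega
          · exfalso
            have hxe : x = n + 1 := by omega
            rw [hxe] at hP
            exact hkeep hP
        · rintro ⟨⟨hx, hP⟩, hxk⟩
          exact ⟨⟨hx, hP⟩, by omega⟩
      rw [hset, ihn']
      have hstep := Mfun_succ U Y d B η n
      have hMeq : Mfun U Y d B η (n+1) = (n+1) - Vval U Y d B η (n+1) := by
        rcases max_choice ((n+1) - Vval U Y d B η (n+1)) (Mfun U Y d B η n) with h | h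
        · rw [hstep, h]
        · rw [hstep, h] at hkeep
          omega
      have h1 := sub_V_le_Mfun U Y d B η n
      have h2 : Vval U Y d B η n ≤ Vval U Y d B η (n+1) := Vval_mono hY hd hB (by omega)
      have h3 := Mfun_le U Y d B η n
      omega

end MaxPrefixAux

/-- For each `i ∈ {1,…,C}`, the maximum number of chunks among the first `i`
that a feasible set can fetch equals `i − max_{1≤j≤i} max(0, j − V(j))`. -/
theorem max_prefix_fetch_eq
    (C U : ℕ) (hU : 1 ≤ U) (Y : ℝ) (hY : 0 < Y)
    (d : ℕ → ℕ) (hd : Monotone d)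
    (B : Fin U → ℕ → ℝ) (hB : ∀ u j, 1 ≤ j → 0 ≤ B u j)
    (η : Fin U → ℝ) (hη : ∀ u, 0 ≤ η u) :
    ∀ i ∈ Finset.Icc 1 C,
      IsGreatest
        {m : ℕ | ∃ S, S ⊆ Finset.Icc 1 C ∧ FeasibleAssignment U Y d B η S ∧
          m = (S.filter (fun k => k ≤ i)).card}
        (i - (Finset.Icc 1 i).sup (fun j => j - Vval U Y d B η j)) := by
  classical
  intro i hi
  rw [Finset.mem_Icc] at hi
  obtain ⟨hi1, hiC⟩ := hi
  have hsup : (Finset.Icc 1 i).sup (fun j => j - Vval U Y d B η j) = MaxPrefixAux.Mfun U Y d B η i := rfl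
  rw [hsup]
  constructor
  · -- membership: the greedily kept set is feasible and achieves the bound
    set S : Finset ℕ := (Finset.Icc 1 i).filter
      (fun j => MaxPrefixAux.Mfun U Y d B η j ≤ MaxPrefixAux.Mfun U Y d B η (j-1)) with hS
    have hmemS : ∀ j ∈ S, 1 ≤ j ∧ j ≤ i := by
      intro j hj
      have := (Finset.mem_filter.1 hj).1
      exact Finset.mem_Icc.1 this
    have hcount : ∀ k, k ≤ i → (S.filter (fun x => x ≤ k)).card = k - MaxPrefixAux.Mfun U Y d B η k :=
      fun k hk => MaxPrefixAux.keep_count hY hd hB i k hk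
    have hcond : ∀ j ∈ S, (S.filter (fun k => k ≤ j)).card ≤ Vval U Y d B η j := by
      intro j hj
      obtain ⟨hj1, hji⟩ := hmemS j hj
      rw [hcount j hji]
      have h1 := MaxPrefixAux.sub_V_le_Mfun U Y d B η j
      omega
    obtain ⟨ℓ, hℓ⟩ := MaxPrefixAux.exists_good U hU Y hY d hd B hB η S hcond
    have hfeas : FeasibleAssignment U Y d B η S :=
      MaxPrefixAux.feasible_of_good U Y hY d hd B hB η hη S ℓ hℓ
    refine ⟨S, ?_, hfeas, ?_⟩
    · intro x hx
      have := (hmemS x hx)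
      exact Finset.mem_Icc.2 ⟨this.1, le_trans this.2 hiC⟩
    · rw [hcount i (le_refl i)]
  · -- upper bound
    rintro m ⟨S, hsub, hfeas, rfl⟩
    obtain ⟨j0, hj0mem, hj0⟩ := Finset.exists_mem_eq_sup (Finset.Icc 1 i)
      (by rw [Finset.nonempty_Icc]; omega) (fun j => j - Vval U Y d B η j)
    obtain ⟨hj01, hj0i⟩ := Finset.mem_Icc.1 hj0mem
    have hMeq : MaxPrefixAux.Mfun U Y d B η i = j0 - Vval U Y d B η j0 := hj0
    have hSmem : ∀ k ∈ S, 1 ≤ k ∧ k ≤ C := by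
      intro k hk
      exact Finset.mem_Icc.1 (hsub hk)
    have ha : (S.filter (fun k => k ≤ i)).card ≤ i := by
      have hsub2 : S.filter (fun k => k ≤ i) ⊆ Finset.Icc 1 i := by
        intro k hk
        obtain ⟨hk1, hk2⟩ := Finset.mem_filter.1 hk
        exact Finset.mem_Icc.2 ⟨(hSmem k hk1).1, hk2⟩
      have := Finset.card_le_card hsub2
      rwa [Nat.card_Icc, Nat.add_sub_cancel] at this
    have hb : (S.filter (fun k => k ≤ j0)).card ≤ Vval U Y d B η j0 :=
      MaxPrefixAux.card_le_V U Y hY d hd B hB η hη S hfeas j0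
    have hsplit : (S.filter (fun k => k ≤ i)).card
        ≤ (S.filter (fun k => k ≤ j0)).card + (i - j0) := by
      have hsub3 : S.filter (fun k => k ≤ i)
          ⊆ (S.filter (fun k => k ≤ j0)) ∪ Finset.Icc (j0+1) i := by
        intro k hk
        obtain ⟨hk1, hk2⟩ := Finset.mem_filter.1 hk
        rcases le_or_gt k j0 with h | h
        · exact Finset.mem_union_left _ (Finset.mem_filter.2 ⟨hk1, h⟩)
        · exact Finset.mem_union_right _ (Finset.mem_Icc.2 ⟨by omega, hk2⟩)
      calc (S.filter (fun k => k ≤ i)).card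
          ≤ ((S.filter (fun k => k ≤ j0)) ∪ Finset.Icc (j0+1) i).card :=
            Finset.card_le_card hsub3
        _ ≤ (S.filter (fun k => k ≤ j0)).card + (Finset.Icc (j0+1) i).card :=
            Finset.card_union_le _ _
        _ = (S.filter (fun k => k ≤ j0)).card + (i - j0) := by
            rw [Nat.card_Icc]
            omega
    rw [hMeq]
    omega
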